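/- Let N = 2 and let R be the additive subgroup of (Fin 5 → ZMod 2) generated by the two rows (1,1,1,1,0) and (0,0,0,1,1). Then S(R) = 2, i.e. S(R) = s − 3 for s = 5. (This is the verification that the genus-2 family of Table 1, with Galois group Z/2 × Z/2, N = 2 and monodromy data {(1,0),(1,0),(1,0),(1,1),(0,1)}, generates a Shimura subvariety: dim S(G) = s − 3.) -/

import Mathlib

open Finset

/-- `paperD N α = −1 + (1/N)·∑_j val(−α_j)` : the dimension `d(α)` of the eigenspace of
holomorphic differentials with local monodromy data `α` (Proposition 2.2.3). -/
noncomputable def paperD {s : ℕ} (N : ℕ) (α : Fin s → ZMod N) : ℚ :=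
  -1 + (1 / (N : ℚ)) * ∑ j, (((-α j).val : ℚ))

/-- `paperS R` : the dimension of the PEL Shimura subvariety `S(G)` attached to a family of
abelian covers with character data the finite additive subgroup `R` (Lemma 2.2.1):
`S(R) = (1/2)·∑_{α ∈ R, 2α ≠ 0} d(α)d(−α) + (1/2)·∑_{α ∈ R, α ≠ 0, 2α = 0} d(α)(d(α)+1)`. -/
noncomputable def paperS {s N : ℕ} [NeZero N] (R : AddSubgroup (Fin s → ZMod N)) : ℚ :=
  (1 / 2) * ∑ α ∈ ((R : Set (Fin s → ZMod N)).toFinite.toFinset.filter fun α => 2 • α ≠ 0),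
      paperD N α * paperD N (-α)
  + (1 / 2) * ∑ α ∈ ((R : Set (Fin s → ZMod N)).toFinite.toFinset.filter
        fun α => α ≠ 0 ∧ 2 • α = 0),
      paperD N α * (paperD N α + 1)

abbrev aa : Fin 5 → ZMod 2 := ![1, 1, 1, 1, 0]
abbrev bb : Fin 5 → ZMod 2 := ![0, 0, 0, 1, 1]

lemma closure_eq :
    ((AddSubgroup.closure {aa, bb} : AddSubgroup (Fin 5 → ZMod 2)) : Set (Fin 5 → ZMod 2))
      = (({0, aa, bb, aa + bb} : Finset (Fin 5 → ZMod 2)) : Set (Fin 5 → ZMod 2)) := by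
  apply le_antisymm
  · intro x hx
    induction hx using AddSubgroup.closure_induction with
    | mem y hy =>
      rcases hy with h | h <;> subst h <;> decide
    | zero => decide
    | add x y hxm hym hx hy =>
      clear hxm hym
      revert hx hy
      simp only [Finset.coe_insert, Set.mem_insert_iff, Finset.coe_singleton,
        Set.mem_singleton_iff]
      revert x y; decide
    | neg x hxm hx =>
      clear hxm
      revert hx
      simp only [Finset.coe_insert, Set.mem_insert_iff, Finset.coe_singleton,
        Set.mem_singleton_iff]
      revert x; decide
  · intro x hx
    simp only [Finset.coe_insert, Set.mem_insert_iff, Finset.coe_singleton,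
      Set.mem_singleton_iff] at hx
    rcases hx with h | h | h | h <;> subst h
    · exact zero_mem _
    · exact AddSubgroup.subset_closure (by simp)
    · exact AddSubgroup.subset_closure (by simp)
    · exact add_mem (AddSubgroup.subset_closure (by simp))
        (AddSubgroup.subset_closure (by simp))

/-- Table 1, genus-2 family: `G = ℤ/2 × ℤ/2`, `N = 2`, monodromy data
`{(1,0),(1,0),(1,0),(1,1),(0,1)}` (rows `(1,1,1,1,0)` and `(0,0,0,1,1)`): `S(R) = 2 = s − 3`. -/
theorem table1_genus2 :
    paperS (AddSubgroup.closure {(![1, 1, 1, 1, 0] : Fin 5 → ZMod 2), ![0, 0, 0, 1, 1]}) = 2 := by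
  have hfin : ((AddSubgroup.closure {aa, bb} : AddSubgroup (Fin 5 → ZMod 2)) :
      Set (Fin 5 → ZMod 2)).toFinite.toFinset = ({0, aa, bb, aa + bb} : Finset _) := by
    ext x
    simp [Set.Finite.mem_toFinset, closure_eq]
  show paperS (AddSubgroup.closure {aa, bb}) = 2
  rw [paperS, hfin]
  have h1 : (({0, aa, bb, aa + bb} : Finset (Fin 5 → ZMod 2)).filter fun α => 2 • α ≠ 0) = ∅ := by
    decide
  have h2 : (({0, aa, bb, aa + bb} : Finset (Fin 5 → ZMod 2)).filter
      fun α => α ≠ 0 ∧ 2 • α = 0) = ({aa, bb, aa + bb} : Finset _) := by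
    decide
  rw [h1, h2]
  rw [show ({aa, bb, aa + bb} : Finset (Fin 5 → ZMod 2)) = insert aa (insert bb {aa + bb}) from rfl]
  rw [Finset.sum_insert (by decide), Finset.sum_insert (by decide), Finset.sum_singleton]
  simp only [paperD, Fin.sum_univ_five]
  norm_num [-ZMod.natCast_val, Matrix.cons_val, aa, bb, Pi.add_apply,
    show (-(1:ZMod 2)) = 1 from by decide, show ((1:ZMod 2)+1) = 0 from by decide,
    show ((1:ZMod 2)+0) = 1 from by decide, show ((0:ZMod 2)+1) = 1 from by decide,
    show ((1:ZMod 2)).val = 1 from rfl, show ((0:ZMod 2)).val = 0 from rfl,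
    show (![1, 1, 1, 1, 0] : Fin 5 → ZMod 2) 2 = 1 from rfl,
    show (![1, 1, 1, 1, 0] : Fin 5 → ZMod 2) 3 = 1 from rfl,
    show (![1, 1, 1, 1, 0] : Fin 5 → ZMod 2) 4 = 0 from rfl,
    show (![0, 0, 0, 1, 1] : Fin 5 → ZMod 2) 2 = 0 from rfl,
    show (![0, 0, 0, 1, 1] : Fin 5 → ZMod 2) 3 = 1 from rfl,
    show (![0, 0, 0, 1, 1] : Fin 5 → ZMod 2) 4 = 1 from rfl]
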